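/- Let m ≥ 2 and let ϑ be the degree-m random metallic mean substitution a ↦ {aⁱ b a^{m−i} : 0 ≤ i ≤ m}, b ↦ {a}, with S_m = {aⁱ b a^{m−i} : 0 ≤ i ≤ m}. If ϑᵖ(a)·u·S_m contains a ϑ-legal word for some word u, then for every 0 ≤ j ≤ m the set ϑᵖ(a)·ϑ(u)·(ϑ(b))ʲ·S_m contains a ϑ-legal word. -/

import Mathlib

/-- Two-letter alphabet. -/
inductive AB : Type
  | a : AB
  | b : AB
deriving DecidableEq

/-- Extension of a random substitution to words, by setwise concatenation. -/
def substW (θ : AB → Set (List AB)) : List AB → Set (List AB)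
  | [] => {[]}
  | x :: w => {u | ∃ v ∈ θ x, ∃ t ∈ substW θ w, u = v ++ t}

/-- Extension of a random substitution to sets of words. -/
def substS (θ : AB → Set (List AB)) (A : Set (List AB)) : Set (List AB) :=
  ⋃ w ∈ A, substW θ w

/-- Level-`n` inflation words of the letter `x`. -/
def substIter (θ : AB → Set (List AB)) (n : ℕ) (x : AB) : Set (List AB) :=
  (substS θ)^[n] {[x]}

/-- A word is legal if it is a subword of some level-`k` inflation word. -/
def legalW (θ : AB → Set (List AB)) (u : List AB) : Prop :=
  ∃ (k : ℕ) (x : AB), ∃ w ∈ substIter θ k x, u <:+: w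

/-- The random Fibonacci substitution a ↦ {ab, ba}, b ↦ {a}. -/
def randFib : AB → Set (List AB)
  | AB.a => {[AB.a, AB.b], [AB.b, AB.a]}
  | AB.b => {[AB.a]}

/-- The degree-`m` random metallic mean substitution
`a ↦ {aⁱ b a^(m-i) : 0 ≤ i ≤ m}`, `b ↦ {a}`. -/
def randMet (m : ℕ) : AB → Set (List AB)
  | AB.a => {w | ∃ i ≤ m,
      w = List.replicate i AB.a ++ AB.b :: List.replicate (m - i) AB.a}
  | AB.b => {[AB.a]}

/-- `j`-fold setwise concatenation of a set of words with itself. -/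
def setNPow (A : Set (List AB)) : ℕ → Set (List AB)
  | 0 => {[]}
  | j + 1 => {w | ∃ u ∈ setNPow A j, ∃ v ∈ A, w = u ++ v}

section Aux

variable (θ : AB → Set (List AB))

theorem substW_singleton' {x : AB} {y : List AB} : y ∈ substW θ [x] ↔ y ∈ θ x := by
  simp [substW]

theorem mem_substW_append {w₁ w₂ : List AB} {y : List AB} :
    y ∈ substW θ (w₁ ++ w₂) ↔ ∃ u ∈ substW θ w₁, ∃ t ∈ substW θ w₂, y = u ++ t := by
  induction w₁ generalizing y with
  | nil =>
    constructor
    · intro h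
      exact ⟨[], rfl, y, h, rfl⟩
    · rintro ⟨u, hu, t, ht, rfl⟩
      obtain rfl : u = [] := hu
      simpa using ht
  | cons x w ih =>
    constructor
    · rintro ⟨v, hv, t, ht, rfl⟩
      obtain ⟨u, hu, t₂, ht₂, rfl⟩ := ih.1 ht
      exact ⟨v ++ u, ⟨v, hv, u, hu, rfl⟩, t₂, ht₂, by simp⟩
    · rintro ⟨U, ⟨v, hv, u, hu, rfl⟩, t₂, ht₂, rfl⟩
      exact ⟨v, hv, u ++ t₂, ih.2 ⟨u, hu, t₂, ht₂, rfl⟩, by simp⟩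

theorem mem_substS' {A : Set (List AB)} {y : List AB} :
    y ∈ substS θ A ↔ ∃ w ∈ A, y ∈ substW θ w := by
  simp [substS]

theorem iterS_mem (n : ℕ) : ∀ (A : Set (List AB)) (y : List AB),
    y ∈ (substS θ)^[n] A ↔ ∃ w ∈ A, y ∈ (substS θ)^[n] {w} := by
  induction n with
  | zero =>
    intro A y; simp
  | succ n ih =>
    intro A y
    rw [Function.iterate_succ_apply, ih]
    constructor
    · rintro ⟨z, hz, hy⟩
      obtain ⟨w, hw, hzw⟩ := (mem_substS' θ).1 hz
      refine ⟨w, hw, ?_⟩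
      rw [Function.iterate_succ_apply, ih]
      exact ⟨z, (mem_substS' θ).2 ⟨w, rfl, hzw⟩, hy⟩
    · rintro ⟨w, hw, hy⟩
      rw [Function.iterate_succ_apply, ih] at hy
      obtain ⟨z, hz, hy⟩ := hy
      obtain ⟨w', hw', hzw⟩ := (mem_substS' θ).1 hz
      obtain rfl : w' = w := hw'
      exact ⟨z, (mem_substS' θ).2 ⟨w', hw, hzw⟩, hy⟩

theorem subW_iterS {n : ℕ} {A : Set (List AB)} {x y : List AB}
    (hx : x ∈ (substS θ)^[n] A) (hy : y ∈ substW θ x) :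
    y ∈ (substS θ)^[n+1] A := by
  rw [Function.iterate_succ_apply']
  exact (mem_substS' θ).2 ⟨x, hx, hy⟩

theorem iterS_append (n : ℕ) : ∀ (w₁ w₂ y : List AB),
    y ∈ (substS θ)^[n] {w₁ ++ w₂} ↔
      ∃ u ∈ (substS θ)^[n] {w₁}, ∃ t ∈ (substS θ)^[n] {w₂}, y = u ++ t := by
  induction n with
  | zero =>
    intro w₁ w₂ y; simp
  | succ n ih =>
    intro w₁ w₂ y
    constructor
    · intro hy
      rw [Function.iterate_succ_apply, iterS_mem θ n] at hy
      obtain ⟨z, hz, hy⟩ := hy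
      obtain ⟨w', hw', hzw⟩ := (mem_substS' θ).1 hz
      obtain rfl : w' = w₁ ++ w₂ := hw'
      obtain ⟨u₀, hu₀, t₀, ht₀, rfl⟩ := (mem_substW_append θ).1 hzw
      obtain ⟨u, hu, t, ht, rfl⟩ := (ih u₀ t₀ y).1 hy
      refine ⟨u, ?_, t, ?_, rfl⟩
      · rw [Function.iterate_succ_apply, iterS_mem θ n]
        exact ⟨u₀, (mem_substS' θ).2 ⟨w₁, rfl, hu₀⟩, hu⟩
      · rw [Function.iterate_succ_apply, iterS_mem θ n]
        exact ⟨t₀, (mem_substS' θ).2 ⟨w₂, rfl, ht₀⟩, ht⟩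
    · rintro ⟨u, hu, t, ht, rfl⟩
      rw [Function.iterate_succ_apply, iterS_mem θ n] at hu ht
      obtain ⟨u₀, hu₀, hu⟩ := hu
      obtain ⟨t₀, ht₀, ht⟩ := ht
      obtain ⟨w', hw', hu₀w⟩ := (mem_substS' θ).1 hu₀
      obtain rfl : w' = w₁ := hw'
      obtain ⟨w'', hw'', ht₀w⟩ := (mem_substS' θ).1 ht₀
      obtain rfl : w'' = w₂ := hw''
      rw [Function.iterate_succ_apply, iterS_mem θ n]
      refine ⟨u₀ ++ t₀, (mem_substS' θ).2 ⟨w' ++ w'', rfl,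
        (mem_substW_append θ).2 ⟨u₀, hu₀w, t₀, ht₀w, rfl⟩⟩, ?_⟩
      exact (ih u₀ t₀ _).2 ⟨u, hu, t, ht, rfl⟩

theorem mem_substIter_succ {n : ℕ} {x : AB} {y : List AB} :
    y ∈ substIter θ (n+1) x ↔ ∃ s ∈ θ x, y ∈ (substS θ)^[n] {s} := by
  show y ∈ (substS θ)^[n+1] {[x]} ↔ _
  rw [Function.iterate_succ_apply, iterS_mem θ n]
  constructor
  · rintro ⟨w, hw, hy⟩
    obtain ⟨w', hw', hww⟩ := (mem_substS' θ).1 hw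
    obtain rfl : w' = [x] := hw'
    exact ⟨w, (substW_singleton' θ).1 hww, hy⟩
  · rintro ⟨s, hs, hy⟩
    exact ⟨s, (mem_substS' θ).2 ⟨[x], rfl, (substW_singleton' θ).2 hs⟩, hy⟩

theorem legal_infix {u v : List AB} (h : legalW θ u) (hv : v <:+: u) : legalW θ v := by
  obtain ⟨k, x, w, hw, hu⟩ := h
  exact ⟨k, x, w, hw, hv.trans hu⟩

theorem legal_subst (hne : ∀ w, (substW θ w).Nonempty) {X V : List AB}
    (h : legalW θ X) (hV : V ∈ substW θ X) : legalW θ V := by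
  obtain ⟨k, x, w, hw, hX⟩ := h
  obtain ⟨l, r, hlr⟩ := hX
  obtain ⟨L, hL⟩ := hne l
  obtain ⟨R, hR⟩ := hne r
  refine ⟨k+1, x, L ++ V ++ R, ?_, L, R, rfl⟩
  have hmem : L ++ V ++ R ∈ substW θ (l ++ X ++ r) :=
    (mem_substW_append θ).2 ⟨L ++ V,
      (mem_substW_append θ).2 ⟨L, hL, V, hV, rfl⟩, R, hR, rfl⟩
  rw [hlr] at hmem
  exact subW_iterS θ hw hmem

end Aux

section RM
variable (m : ℕ)

theorem substW_randMet_nonempty (w : List AB) : (substW (randMet m) w).Nonempty := by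
  induction w with
  | nil => exact ⟨[], rfl⟩
  | cons x w ih =>
    obtain ⟨T, hT⟩ := ih
    cases x with
    | a =>
      exact ⟨(List.replicate 0 AB.a ++ AB.b :: List.replicate (m-0) AB.a) ++ T,
        ⟨_, ⟨0, Nat.zero_le m, rfl⟩, T, hT, rfl⟩⟩
    | b => exact ⟨[AB.a] ++ T, ⟨[AB.a], rfl, T, hT, rfl⟩⟩

theorem substS_b : substS (randMet m) {[AB.b]} = {[AB.a]} := by
  ext y
  rw [mem_substS']
  constructor
  · rintro ⟨w, hw, hy⟩
    obtain rfl : w = [AB.b] := hw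
    exact (substW_singleton' _).1 hy
  · intro hy
    exact ⟨[AB.b], rfl, (substW_singleton' _).2 hy⟩

theorem iter_b (r : ℕ) :
    substIter (randMet m) (r+1) AB.b = substIter (randMet m) r AB.a := by
  show (substS (randMet m))^[r+1] {[AB.b]} = (substS (randMet m))^[r] {[AB.a]}
  rw [Function.iterate_succ_apply, substS_b]

theorem setNPow_b (j : ℕ) :
    setNPow (randMet m AB.b) j = {List.replicate j AB.a} := by
  induction j with
  | zero => rfl
  | succ j ih =>
    ext y
    constructor
    · rintro ⟨u, hu, v, hv, rfl⟩
      rw [ih] at hu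
      obtain rfl : u = List.replicate j AB.a := hu
      obtain rfl : v = [AB.a] := hv
      exact (List.replicate_succ').symm
    · intro hy
      obtain rfl : y = List.replicate (j+1) AB.a := hy
      exact ⟨List.replicate j AB.a, by rw [ih]; rfl, [AB.a], rfl,
        List.replicate_succ'⟩

-- commutation helper
theorem acomm (k : ℕ) : AB.a :: List.replicate k AB.a = List.replicate k AB.a ++ [AB.a] :=
  (List.replicate_succ).symm.trans (List.replicate_succ')

end RM

section RM2
variable (m : ℕ)

theorem acomm' (k : ℕ) (l : List AB) :
    AB.a :: (List.replicate k AB.a ++ l) = List.replicate k AB.a ++ (AB.a :: l) := by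
  rw [← List.cons_append, acomm, List.append_assoc]
  rfl

theorem sp (hm : 2 ≤ m) {i : ℕ} (hi : i ≤ m) :
    ∃ S ∈ substW (randMet m) (List.replicate i AB.a ++ AB.b :: List.replicate (m-i) AB.a),
      ∃ Z, S = List.replicate m AB.a ++ AB.b :: (List.replicate m AB.a ++ Z) := by
  obtain ⟨n, rfl⟩ : ∃ n, m = n + 2 := ⟨m - 2, by omega⟩
  have htfull : (List.replicate (n+2) AB.a ++ [AB.b]) ∈ randMet (n+2) AB.a :=
    ⟨n+2, le_rfl, by rw [Nat.sub_self]; rfl⟩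
  have htlast : (List.replicate (n+1) AB.a ++ [AB.b, AB.a]) ∈ randMet (n+2) AB.a := by
    refine ⟨n+1, by omega, ?_⟩
    rw [show n+2-(n+1) = 1 by omega]
    rfl
  match i, hi with
  | 0, _ =>
    obtain ⟨R, hR⟩ := substW_randMet_nonempty (n+2) (List.replicate n AB.a)
    have hword : List.replicate 0 AB.a ++ AB.b :: List.replicate (n+2-0) AB.a
        = AB.b :: (AB.a :: (AB.a :: List.replicate n AB.a)) := by
      simp [List.replicate_succ]
    refine ⟨[AB.a] ++ ((List.replicate (n+1) AB.a ++ [AB.b, AB.a]) ++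
        ((List.replicate (n+2) AB.a ++ [AB.b]) ++ R)), ?_, [AB.a, AB.b] ++ R, ?_⟩
    · rw [hword]
      exact ⟨[AB.a], rfl, _, ⟨_, htlast, _, ⟨_, htfull, R, hR, rfl⟩, rfl⟩, rfl⟩
    · simp [List.replicate_succ, acomm', List.append_assoc]
  | 1, _ =>
    obtain ⟨R, hR⟩ := substW_randMet_nonempty (n+2) (List.replicate n AB.a)
    have hword : List.replicate 1 AB.a ++ AB.b :: List.replicate (n+2-1) AB.a
        = AB.a :: (AB.b :: (AB.a :: List.replicate n AB.a)) := by
      rw [show n+2-1 = n+1 by omega]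
      simp [List.replicate_succ]
    refine ⟨(List.replicate (n+2) AB.a ++ [AB.b]) ++ ([AB.a] ++
        ((List.replicate (n+2) AB.a ++ [AB.b]) ++ R)), ?_, [AB.a, AB.b] ++ R, ?_⟩
    · rw [hword]
      exact ⟨_, htfull, _, ⟨[AB.a], rfl, _, ⟨_, htfull, R, hR, rfl⟩, rfl⟩, rfl⟩
    · simp [List.replicate_succ, acomm', List.append_assoc]
  | (i₀+2), hi =>
    obtain ⟨R, hR⟩ := substW_randMet_nonempty (n+2)
      (List.replicate i₀ AB.a ++ AB.b :: List.replicate (n+2-(i₀+2)) AB.a)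
    have hword : List.replicate (i₀+2) AB.a ++ AB.b :: List.replicate (n+2-(i₀+2)) AB.a
        = AB.a :: (AB.a :: (List.replicate i₀ AB.a ++ AB.b :: List.replicate (n+2-(i₀+2)) AB.a)) := by
      simp [List.replicate_succ]
    refine ⟨(List.replicate (n+2) AB.a ++ [AB.b]) ++
        ((List.replicate (n+2) AB.a ++ [AB.b]) ++ R), ?_, [AB.b] ++ R, ?_⟩
    · rw [hword]
      exact ⟨_, htfull, _, ⟨_, htfull, R, hR, rfl⟩, rfl⟩
    · simp [List.replicate_succ, acomm', List.append_assoc]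

end RM2

section RM3
variable (m : ℕ)

theorem suf (hm : 1 ≤ m) : ∀ p, ∀ v ∈ substIter (randMet m) p AB.a,
    ∃ V ∈ substW (randMet m) v, ∃ v' ∈ substIter (randMet m) p AB.a,
      ∃ V₀, V = V₀ ++ v' := by
  obtain ⟨n, rfl⟩ : ∃ n, m = n + 1 := ⟨m - 1, by omega⟩
  intro p
  induction p using Nat.strong_induction_on with
  | _ p ih =>
  cases p with
  | zero =>
    intro v hv
    obtain rfl : v = [AB.a] := hv
    refine ⟨AB.b :: List.replicate (n+1) AB.a,
      (substW_singleton' _).2 ⟨0, Nat.zero_le _, by simp⟩,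
      [AB.a], rfl, AB.b :: List.replicate n AB.a, ?_⟩
    rw [List.replicate_succ']
    rfl
  | succ q =>
    intro v hv
    obtain ⟨s₀, hs₀, hvq⟩ := (mem_substIter_succ _).1 hv
    obtain ⟨i, hi, rfl⟩ := hs₀
    rcases Nat.lt_or_ge i (n+1) with hilt | hige
    · -- i < m : s₀ ends with a
      obtain ⟨k, hk⟩ : ∃ k, n + 1 - i = k + 1 := ⟨n - i, by omega⟩
      have hs : List.replicate i AB.a ++ AB.b :: List.replicate (n+1-i) AB.a
          = (List.replicate i AB.a ++ AB.b :: List.replicate k AB.a) ++ [AB.a] := by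
        rw [hk, List.replicate_succ']
        simp
      rw [hs] at hvq
      obtain ⟨C, hC, w, hw, rfl⟩ := (iterS_append _ q _ _ _).1 hvq
      obtain ⟨C', hC'⟩ := substW_randMet_nonempty (n+1) C
      obtain ⟨W, hW⟩ := substW_randMet_nonempty (n+1) w
      exact ⟨C' ++ W, (mem_substW_append _).2 ⟨C', hC', W, hW, rfl⟩,
        W, subW_iterS _ hw hW, C', rfl⟩
    · -- i = m
      obtain rfl : i = n+1 := le_antisymm hi hige
      have hs : List.replicate (n+1) AB.a ++ AB.b :: List.replicate (n+1-(n+1)) AB.a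
          = List.replicate n AB.a ++ ([AB.a] ++ [AB.b]) := by
        rw [Nat.sub_self, List.replicate_succ']
        simp
      rw [hs] at hvq
      obtain ⟨C, hC, X, hX, rfl⟩ := (iterS_append _ q _ _ _).1 hvq
      obtain ⟨vm, hvm, B, hB, rfl⟩ := (iterS_append _ q _ _ _).1 hX
      cases q with
      | zero =>
        obtain rfl : vm = [AB.a] := hvm
        obtain rfl : B = [AB.b] := hB
        obtain ⟨C', hC'⟩ := substW_randMet_nonempty (n+1) C
        have hT : (List.replicate (n+1) AB.a ++ [AB.b]) ∈ randMet (n+1) AB.a :=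
          ⟨n+1, le_rfl, by rw [Nat.sub_self]; rfl⟩
        have hv'mem : (List.replicate n AB.a ++ AB.b :: List.replicate 1 AB.a)
            ∈ substIter (randMet (n+1)) 1 AB.a := by
          refine (mem_substIter_succ _).2
            ⟨List.replicate n AB.a ++ AB.b :: List.replicate (n+1-n) AB.a,
              ⟨n, by omega, rfl⟩, ?_⟩
          rw [show n+1-n = 1 by omega]
          rfl
        refine ⟨C' ++ (((List.replicate (n+1) AB.a ++ [AB.b]) ++ [AB.a])),
          (mem_substW_append _).2 ⟨C', hC', _,
            (mem_substW_append _).2 ⟨_, (substW_singleton' _).2 hT, [AB.a],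
              (substW_singleton' _).2 rfl, rfl⟩, rfl⟩,
          _, hv'mem, C' ++ [AB.a], ?_⟩
        simp [List.replicate_succ, acomm', List.append_assoc]
      | succ r =>
        have hB' : B ∈ (substS (randMet (n+1)))^[r] {[AB.a]} := by
          have h2 : B ∈ substIter (randMet (n+1)) (r+1) AB.b := hB
          rwa [iter_b (n+1) r] at h2
        have hvm' : vm ∈ substIter (randMet (n+1)) (r+1) AB.a := hvm
        obtain ⟨s₁, hs₁, hvmr⟩ := (mem_substIter_succ _).1 hvm'
        obtain ⟨i', hi', rfl⟩ := hs₁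
        rcases Nat.eq_zero_or_pos i' with rfl | hpos
        · -- i' = 0
          have hs1 : List.replicate 0 AB.a ++ AB.b :: List.replicate (n+1-0) AB.a
              = [AB.b] ++ ([AB.a] ++ List.replicate n AB.a) := by
            simp [List.replicate_succ]
          have hs1' : List.replicate 0 AB.a ++ AB.b :: List.replicate (n+1-0) AB.a
              = [AB.b] ++ (List.replicate n AB.a ++ [AB.a]) := by
            simp [List.replicate_succ']
          rw [hs1] at hvmr
          obtain ⟨B', hB'', Y, hY, rfl⟩ := (iterS_append _ r _ _ _).1 hvmr
          obtain ⟨w', hw', C₂, hC₂, rfl⟩ := (iterS_append _ r _ _ _).1 hY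
          obtain ⟨W, hW, ω, hω, W₀, rfl⟩ := ih r (by omega) w' hw'
          obtain ⟨EC, hEC⟩ := substW_randMet_nonempty (n+1) C
          obtain ⟨EB, hEB⟩ := substW_randMet_nonempty (n+1) B'
          obtain ⟨F, hF⟩ := substW_randMet_nonempty (n+1) C₂
          obtain ⟨G, hG⟩ := substW_randMet_nonempty (n+1) B
          refine ⟨EC ++ ((EB ++ ((W₀ ++ ω) ++ F)) ++ G),
            (mem_substW_append _).2 ⟨EC, hEC, _,
              (mem_substW_append _).2 ⟨EB ++ ((W₀ ++ ω) ++ F),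
                (mem_substW_append _).2 ⟨EB, hEB, _,
                  (mem_substW_append _).2 ⟨W₀ ++ ω, hW, F, hF, rfl⟩, rfl⟩,
                G, hG, rfl⟩, rfl⟩,
            ω ++ (F ++ G), ?_, EC ++ (EB ++ W₀), by simp [List.append_assoc]⟩
          refine (mem_substIter_succ _).2
            ⟨List.replicate 0 AB.a ++ AB.b :: List.replicate (n+1-0) AB.a,
              ⟨0, Nat.zero_le _, rfl⟩, ?_⟩
          rw [hs1']
          refine (iterS_append _ (r+1) _ _ _).2 ⟨ω, ?_, F ++ G, ?_, rfl⟩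
          · have h3 : ω ∈ substIter (randMet (n+1)) r AB.a := hω
            rw [← iter_b (n+1) r] at h3
            exact h3
          · exact (iterS_append _ (r+1) _ _ _).2
              ⟨F, subW_iterS _ hC₂ hF, G, subW_iterS _ hB' hG, rfl⟩
        · -- i' ≥ 1
          obtain ⟨i₀, rfl⟩ : ∃ i₀, i' = i₀ + 1 := ⟨i' - 1, by omega⟩
          have hs1 : List.replicate (i₀+1) AB.a ++ AB.b :: List.replicate (n+1-(i₀+1)) AB.a
              = [AB.a] ++ (List.replicate i₀ AB.a ++ AB.b :: List.replicate (n+1-(i₀+1)) AB.a) := by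
            simp [List.replicate_succ]
          rw [hs1] at hvmr
          obtain ⟨w₁, hw₁, D, hD, rfl⟩ := (iterS_append _ r _ _ _).1 hvmr
          have hδ : D ++ B ∈ substIter (randMet (n+1)) (r+1) AB.a := by
            refine (mem_substIter_succ _).2
              ⟨List.replicate i₀ AB.a ++ AB.b :: List.replicate (n+1-i₀) AB.a,
                ⟨i₀, by omega, rfl⟩, ?_⟩
            have hw : List.replicate i₀ AB.a ++ AB.b :: List.replicate (n+1-i₀) AB.a
                = (List.replicate i₀ AB.a ++ AB.b :: List.replicate (n+1-(i₀+1)) AB.a) ++ [AB.a] := by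
              rw [show n+1-i₀ = (n+1-(i₀+1)) + 1 by omega, List.replicate_succ']
              simp
            rw [hw]
            exact (iterS_append _ r _ _ _).2 ⟨D, hD, B, hB', rfl⟩
          obtain ⟨E, hE⟩ := substW_randMet_nonempty (n+1) (C ++ w₁)
          obtain ⟨Δ, hΔ⟩ := substW_randMet_nonempty (n+1) (D ++ B)
          refine ⟨E ++ Δ, ?_, Δ, subW_iterS _ hδ hΔ, E, rfl⟩
          have hveq : C ++ ((w₁ ++ D) ++ B) = (C ++ w₁) ++ (D ++ B) := by
            simp [List.append_assoc]
          rw [hveq]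
          exact (mem_substW_append _).2 ⟨E, hE, Δ, hΔ, rfl⟩

end RM3


/-- Technical lemma for the degree-`m` random metallic mean substitution
(`m ≥ 2`): if `ϑᵖ(a)·u·S_m` contains a legal word, then for every `0 ≤ j ≤ m`
the set `ϑᵖ(a)·ϑ(u)·(ϑ(b))ʲ·S_m` contains a legal word, where
`S_m = {aⁱ b a^(m-i) : 0 ≤ i ≤ m} = ϑ(a)`. -/
theorem randMet_step (m : ℕ) (hm : 2 ≤ m) (p : ℕ) (u : List AB)
    (h : ∃ v ∈ substIter (randMet m) p AB.a, ∃ s ∈ randMet m AB.a,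
        legalW (randMet m) (v ++ u ++ s)) :
    ∀ j ≤ m, ∃ v ∈ substIter (randMet m) p AB.a,
      ∃ u' ∈ substW (randMet m) u,
      ∃ w ∈ setNPow (randMet m AB.b) j,
      ∃ s ∈ randMet m AB.a,
      legalW (randMet m) (v ++ u' ++ w ++ s) := by
  obtain ⟨v, hv, s, hs, hleg⟩ := h
  intro j hj
  obtain ⟨V, hVmem, v', hv', V₀, rfl⟩ := suf m (by omega) p v hv
  obtain ⟨u', hu'⟩ := substW_randMet_nonempty m u
  obtain ⟨i, hi, rfl⟩ := hs
  obtain ⟨S, hSmem, Z, rfl⟩ := sp m hm hi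
  have hY : (V₀ ++ v') ++ u' ++ (List.replicate m AB.a ++ AB.b :: (List.replicate m AB.a ++ Z))
      ∈ substW (randMet m)
        (v ++ u ++ (List.replicate i AB.a ++ AB.b :: List.replicate (m-i) AB.a)) :=
    (mem_substW_append _).2 ⟨(V₀ ++ v') ++ u',
      (mem_substW_append _).2 ⟨V₀ ++ v', hVmem, u', hu', rfl⟩,
      _, hSmem, rfl⟩
  have hYleg := legal_subst _ (substW_randMet_nonempty m) hleg hY
  have hsplit : List.replicate m AB.a = List.replicate j AB.a ++ List.replicate (m-j) AB.a := by
    rw [← List.replicate_add]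
    congr 1
    omega
  refine ⟨v', hv', u', hu', List.replicate j AB.a, by rw [setNPow_b]; rfl,
    List.replicate (m-j) AB.a ++ AB.b :: List.replicate j AB.a,
    ⟨m-j, by omega, by rw [show m-(m-j) = j by omega]⟩, ?_⟩
  refine legal_infix _ hYleg ⟨V₀, List.replicate (m-j) AB.a ++ Z, ?_⟩
  rw [hsplit]
  simp only [List.append_assoc, List.cons_append, List.singleton_append, List.nil_append]
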